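/- Let (μ_k) ∈ ℓ² and (β̃_k) ∈ ℓ², with λ_k = πk + μ_k, α_k⁻¹ = 1 − β̃_k. Then the series φ(s) = ∑_{k=1}^∞ (cos(πks) − α_k⁻¹ cos(λ_k s)) converges in L²(0,2), using the decomposition cos(πks) − α_k⁻¹cos(λ_k s) = 2 sin(μ_k s/2) sin((πk + μ_k/2)s) + β̃_k cos(λ_k s) and the Riesz basis property of {sin((πk+μ_k/2)s)} and {cos(λ_k s)} in their closed linear spans in L²(0,2). -/

import Mathlib

open Filter Real MeasureTheory

noncomputable section Stmt10Aux

lemma intCosInt (t : ℤ) : ∫ s in (0:ℝ)..2, Real.cos (Real.pi * t * s) = if t = 0 then 2 else 0 := by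
  by_cases ht : t = 0
  · simp [ht]
  · have hc : Real.pi * (t : ℝ) ≠ 0 := mul_ne_zero Real.pi_ne_zero (Int.cast_ne_zero.2 ht)
    rw [if_neg ht, intervalIntegral.integral_comp_mul_left Real.cos hc]
    rw [integral_cos]
    have : Real.pi * (t:ℝ) * 2 = (2*t : ℤ) * Real.pi := by push_cast; ring
    rw [this, Real.sin_int_mul_pi]
    simp

lemma contCos (c : ℝ) : Continuous fun s : ℝ => Real.cos (c * s) := by fun_prop

lemma contSin (c : ℝ) : Continuous fun s : ℝ => Real.sin (c * s) := by fun_prop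

lemma cos_orth (j k : ℕ) :
    ∫ s in (0:ℝ)..2, Real.cos (Real.pi * (j+1) * s) * Real.cos (Real.pi * (k+1) * s)
      = if j = k then 1 else 0 := by
  have key : ∀ s : ℝ, Real.cos (Real.pi * (j+1) * s) * Real.cos (Real.pi * (k+1) * s)
      = (Real.cos (Real.pi * (((j : ℤ) - (k : ℤ) : ℤ) : ℝ) * s)
          + Real.cos (Real.pi * (((j : ℤ) + (k : ℤ) + 2 : ℤ) : ℝ) * s)) / 2 := by
    intro s
    have h1 : Real.pi * (((j : ℤ) - (k : ℤ) : ℤ) : ℝ) * s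
        = Real.pi * (j+1) * s - Real.pi * (k+1) * s := by push_cast; ring
    have h2 : Real.pi * (((j : ℤ) + (k : ℤ) + 2 : ℤ) : ℝ) * s
        = Real.pi * (j+1) * s + Real.pi * (k+1) * s := by push_cast; ring
    rw [h1, h2, Real.cos_sub, Real.cos_add]; ring
  simp only [key]
  rw [intervalIntegral.integral_div, intervalIntegral.integral_add
    ((contCos _).intervalIntegrable 0 2) ((contCos _).intervalIntegrable 0 2),
    intCosInt, intCosInt]
  have h2 : ¬ ((j : ℤ) + (k : ℤ) + 2 = 0) := by omega
  by_cases hjk : j = k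
  · subst hjk; simp [h2]
  · have : ¬ ((j:ℤ) - (k:ℤ) = 0) := by omega
    simp [hjk, this, h2]

lemma sin_orth (j k : ℕ) :
    ∫ s in (0:ℝ)..2, Real.sin (Real.pi * (j+1) * s) * Real.sin (Real.pi * (k+1) * s)
      = if j = k then 1 else 0 := by
  have key : ∀ s : ℝ, Real.sin (Real.pi * (j+1) * s) * Real.sin (Real.pi * (k+1) * s)
      = (Real.cos (Real.pi * (((j : ℤ) - (k : ℤ) : ℤ) : ℝ) * s)
          - Real.cos (Real.pi * (((j : ℤ) + (k : ℤ) + 2 : ℤ) : ℝ) * s)) / 2 := by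
    intro s
    have h1 : Real.pi * (((j : ℤ) - (k : ℤ) : ℤ) : ℝ) * s
        = Real.pi * (j+1) * s - Real.pi * (k+1) * s := by push_cast; ring
    have h2 : Real.pi * (((j : ℤ) + (k : ℤ) + 2 : ℤ) : ℝ) * s
        = Real.pi * (j+1) * s + Real.pi * (k+1) * s := by push_cast; ring
    rw [h1, h2, Real.cos_sub, Real.cos_add]; ring
  simp only [key]
  rw [intervalIntegral.integral_div, intervalIntegral.integral_sub
    ((contCos _).intervalIntegrable 0 2) ((contCos _).intervalIntegrable 0 2),
    intCosInt, intCosInt]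
  have h2 : ¬ ((j : ℤ) + (k : ℤ) + 2 = 0) := by omega
  by_cases hjk : j = k
  · subst hjk; simp [h2]
  · have : ¬ ((j:ℤ) - (k:ℤ) = 0) := by omega
    simp [hjk, this, h2]

def mI : Measure ℝ := volume.restrict (Set.Ioc 0 2)

instance : IsFiniteMeasure mI := by
  constructor
  rw [show mI = volume.restrict (Set.Ioc 0 2) from rfl, Measure.restrict_apply_univ,
    Real.volume_Ioc]
  exact ENNReal.ofReal_lt_top

lemma memL2 {f : ℝ → ℝ} (hf : Continuous f) : MemLp f 2 mI := by
  obtain ⟨C, hC⟩ := (isCompact_Icc (a := (0:ℝ)) (b := 2)).exists_bound_of_continuousOn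
    hf.continuousOn
  apply MemLp.of_bound (hf.aestronglyMeasurable.restrict) C
  filter_upwards [ae_restrict_mem measurableSet_Ioc] with x hx
  exact hC x ⟨le_of_lt hx.1, hx.2⟩

lemma integral_mI {f : ℝ → ℝ} : ∫ a, f a ∂mI = ∫ s in (0:ℝ)..2, f s := by
  rw [intervalIntegral.integral_of_le (by norm_num : (0:ℝ) ≤ 2)]
  rfl

lemma norm_Lp_sq (x : Lp ℝ 2 mI) : ‖x‖ ^ 2 = ∫ a, (x a) ^ 2 ∂mI := by
  rw [← real_inner_self_eq_norm_sq, MeasureTheory.L2.inner_def]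
  apply integral_congr_ae
  filter_upwards with a
  simp [RCLike.inner_apply, conj_trivial, sq]

lemma norm_toLp_sq {f : ℝ → ℝ} (hf : MemLp f 2 mI) :
    ‖hf.toLp f‖ ^ 2 = ∫ s in (0:ℝ)..2, f s ^ 2 := by
  rw [norm_Lp_sq, ← integral_mI]
  apply integral_congr_ae
  filter_upwards [hf.coeFn_toLp] with a ha
  rw [ha]

lemma toLp_congr {f g : ℝ → ℝ} (hf : MemLp f 2 mI) (hg : MemLp g 2 mI) (h : f = g) :
    hf.toLp f = hg.toLp g := by subst h; rfl

lemma integral_sum_sq (F : Finset ℕ) (b : ℕ → ℝ) (e : ℕ → ℝ → ℝ)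
    (he : ∀ k, Continuous (e k))
    (horth : ∀ j k, ∫ s in (0:ℝ)..2, e j s * e k s = if j = k then 1 else 0) :
    ∫ s in (0:ℝ)..2, (∑ k ∈ F, b k * e k s) ^ 2 = ∑ k ∈ F, b k ^ 2 := by
  have key : ∀ s : ℝ, (∑ k ∈ F, b k * e k s) ^ 2
      = ∑ j ∈ F, ∑ k ∈ F, (b j * b k) * (e j s * e k s) := by
    intro s
    rw [sq, Finset.sum_mul_sum]
    exact Finset.sum_congr rfl fun j _ => Finset.sum_congr rfl fun k _ => by ring
  simp only [key]
  rw [intervalIntegral.integral_finset_sum]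
  · have : ∀ j ∈ F, (∫ s in (0:ℝ)..2, ∑ k ∈ F, (b j * b k) * (e j s * e k s))
        = b j ^ 2 := by
      intro j hj
      rw [intervalIntegral.integral_finset_sum]
      · have : ∀ k ∈ F, (∫ s in (0:ℝ)..2, (b j * b k) * (e j s * e k s))
            = if j = k then b j ^2 else 0 := by
          intro k _
          rw [intervalIntegral.integral_const_mul, horth]
          by_cases h : j = k
          · subst h; simp [sq]
          · simp [h]
        rw [Finset.sum_congr rfl this, Finset.sum_ite_eq F j (fun _ => b j ^ 2), if_pos hj]
      · intro k _
        exact (continuous_const.mul ((he j).mul (he k))).intervalIntegrable 0 2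
    rw [Finset.sum_congr rfl this]
  · intro j _
    apply Continuous.intervalIntegrable
    exact continuous_finset_sum _ fun k _ => continuous_const.mul ((he j).mul (he k))

lemma norm_toLp_le_bound {f : ℝ → ℝ} (hf : Continuous f) {C : ℝ} (hC : 0 ≤ C)
    (hb : ∀ s ∈ Set.Icc (0:ℝ) 2, |f s| ≤ C) : ‖(memL2 hf).toLp f‖ ≤ 2 * C := by
  have h2 : ‖(memL2 hf).toLp f‖ ^ 2 ≤ 4 * C ^ 2 := by
    rw [norm_toLp_sq]
    calc ∫ s in (0:ℝ)..2, f s ^ 2 ≤ ∫ _s in (0:ℝ)..2, C ^ 2 := by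
          apply intervalIntegral.integral_mono_on (by norm_num)
            ((hf.pow 2).intervalIntegrable 0 2) (intervalIntegrable_const)
          intro x hx
          have := hb x hx
          have h' := abs_le.1 this
          nlinarith [h'.1, h'.2, show (f^2) x = f x ^ 2 from rfl]
      _ = 2 * C ^ 2 := by simp
      _ ≤ 4 * C ^ 2 := by nlinarith
  nlinarith [norm_nonneg ((memL2 hf).toLp f)]

lemma norm_toLp_mul_s {g : ℝ → ℝ} (hg : Continuous g) :
    ‖(memL2 (continuous_id.mul hg)).toLp (fun s => s * g s)‖ ≤ 2 * ‖(memL2 hg).toLp g‖ := by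
  have h2 : ‖(memL2 (continuous_id.mul hg)).toLp (fun s => s * g s)‖ ^ 2
      ≤ 4 * ‖(memL2 hg).toLp g‖ ^ 2 := by
    rw [norm_toLp_sq, norm_toLp_sq]
    calc ∫ s in (0:ℝ)..2, (s * g s) ^ 2 ≤ ∫ s in (0:ℝ)..2, 4 * g s ^ 2 := by
          apply intervalIntegral.integral_mono_on (by norm_num)
            (((continuous_id.mul hg).pow 2).intervalIntegrable 0 2)
            ((continuous_const.mul (hg.pow 2)).intervalIntegrable 0 2)
          intro x hx
          have h1 := hx.1; have h2' := hx.2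
          show (x * g x) ^ 2 ≤ 4 * g x ^ 2
          nlinarith [mul_nonneg (mul_nonneg (sub_nonneg.2 h2') h1) (sq_nonneg (g x)),
            mul_nonneg (sub_nonneg.2 h2') (sq_nonneg (g x))]
      _ = 4 * ∫ s in (0:ℝ)..2, g s ^ 2 := intervalIntegral.integral_const_mul _ _
  nlinarith [norm_nonneg ((memL2 (continuous_id.mul hg)).toLp (fun s => s * g s)),
    norm_nonneg ((memL2 hg).toLp g)]

end Stmt10Aux

set_option maxHeartbeats 2000000 in
/-- For `(μ_k), (β̃_k) ∈ ℓ²` with `λ_k = πk + μ_k` strictly increasing and positive and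
`α_k⁻¹ = 1 − β̃_k`, the series `φ(s) = ∑_k (cos(πks) − α_k⁻¹ cos(λ_k s))` converges in
`L²(0,2)` (i.e. partial sums converge in the `L²(0,2)`-norm to some `φ`);
here `k ≥ 1` is encoded as `k + 1`, `k : ℕ`. -/
theorem stmt10 (μ βt : ℕ → ℝ) (hμ : Summable fun k => μ k ^ 2)
    (hβ : Summable fun k => βt k ^ 2)
    (hmono : StrictMono fun k : ℕ => Real.pi * (k + 1) + μ k)
    (hpos : ∀ k : ℕ, 0 < Real.pi * (k + 1) + μ k) :
    ∃ φ : ℝ → ℝ, Tendsto (fun N =>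
        ∫ s in (0:ℝ)..2,
          ((∑ k ∈ Finset.range N,
              (Real.cos (Real.pi * (k + 1) * s)
                - (1 - βt k) * Real.cos ((Real.pi * (k + 1) + μ k) * s))) - φ s) ^ 2)
      atTop (nhds 0) := by
  classical
  -- uniform bound on βt
  have hβb : ∀ k, |βt k| ≤ Real.sqrt (∑' i, βt i ^ 2) := by
    intro k
    have h1 : βt k ^ 2 ≤ ∑' i, βt i ^ 2 := Summable.le_tsum hβ k fun i _ => sq_nonneg _
    calc |βt k| = Real.sqrt (βt k ^ 2) := (Real.sqrt_sq_eq_abs _).symm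
      _ ≤ _ := Real.sqrt_le_sqrt h1
  set B := Real.sqrt (∑' i, βt i ^ 2) with hBdef
  have hB0 : 0 ≤ B := Real.sqrt_nonneg _
  -- eventually |μ k| ≤ 1/2
  have hμ0 : Tendsto (fun k => μ k ^ 2) atTop (nhds 0) := hμ.tendsto_atTop_zero
  obtain ⟨N₀, hN₀⟩ := Filter.eventually_atTop.1
    (hμ0.eventually_lt_const (by norm_num : (0:ℝ) < 1/4))
  have hμhalf : ∀ k, N₀ ≤ k → |μ k| ≤ 1/2 := by
    intro k hk
    have h1 : |μ k| = Real.sqrt (μ k ^ 2) := (Real.sqrt_sq_eq_abs _).symm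
    rw [h1]
    calc Real.sqrt (μ k ^ 2) ≤ Real.sqrt (1/4) := Real.sqrt_le_sqrt (hN₀ k hk).le
      _ = 1/2 := by
          rw [show (1/4 : ℝ) = (1/2)^2 by norm_num, Real.sqrt_sq (by norm_num : (0:ℝ) ≤ 1/2)]
  -- definitions
  set S : ℕ → ℝ → ℝ := fun N s => ∑ k ∈ Finset.range N,
      (Real.cos (Real.pi * (k + 1) * s)
        - (1 - βt k) * Real.cos ((Real.pi * (k + 1) + μ k) * s)) with hS
  have contS : ∀ N, Continuous (S N) := by
    intro N
    rw [hS]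
    exact continuous_finset_sum _ fun k _ => by fun_prop
  set FL : ℕ → Lp ℝ 2 mI := fun N => (memL2 (contS N)).toLp (S N) with hFL
  set r : ℕ → ℝ → ℝ := fun k s => (1 - βt k) *
      (Real.cos (Real.pi * (k + 1) * s) * (1 - Real.cos (μ k * s))
        + Real.sin (Real.pi * (k + 1) * s) * (Real.sin (μ k * s) - μ k * s)) with hr
  have contr : ∀ k, Continuous (r k) := by
    intro k; rw [hr]; fun_prop
  -- bound on r
  have hrbound : ∀ k, N₀ ≤ k → ∀ s ∈ Set.Icc (0:ℝ) 2, |r k s| ≤ 8 * (1+B) * μ k ^ 2 := by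
    intro k hk s hs
    have hx : |μ k * s| ≤ 1 := by
      rw [abs_mul]
      have h1 : |μ k| ≤ 1/2 := hμhalf k hk
      have h2 : |s| ≤ 2 := abs_le.2 ⟨by linarith [hs.1], hs.2⟩
      calc |μ k| * |s| ≤ (1/2) * 2 :=
            mul_le_mul h1 h2 (abs_nonneg _) (by norm_num)
        _ = 1 := by norm_num
    set x := μ k * s with hxdef
    have hcosb := Real.cos_bound hx
    have hsinb := Real.sin_bound hx
    have hxabs := abs_le.1 hx
    have hx2 : x ^ 2 ≤ 1 := by nlinarith [hxabs.1, hxabs.2]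
    have hsqabs : |x| ^ 2 = x ^ 2 := sq_abs x
    have h4 : |x| ^ 4 ≤ x ^ 2 := by nlinarith [abs_nonneg x]
    have h3 : |x| ^ 3 ≤ x ^ 2 := by nlinarith [abs_nonneg x]
    have h1c : |1 - Real.cos x| ≤ x ^ 2 := by
      have e : 1 - Real.cos x = -(Real.cos x - (1 - x^2/2)) + x^2/2 := by ring
      rw [e]
      calc |-(Real.cos x - (1 - x^2/2)) + x^2/2|
          ≤ |-(Real.cos x - (1 - x^2/2))| + |x^2/2| := abs_add_le _ _
        _ = |Real.cos x - (1 - x^2/2)| + x^2/2 := by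
            rw [abs_neg, abs_of_nonneg (by positivity : (0:ℝ) ≤ x^2/2)]
        _ ≤ |x|^4 * (5/96) + x^2/2 := by linarith [hcosb]
        _ ≤ x ^ 2 := by nlinarith [h4]
    have h1s : |Real.sin x - x| ≤ x ^ 2 := by
      have e : Real.sin x - x = (Real.sin x - (x - x^3/6)) + -(x^3/6) := by ring
      rw [e]
      calc |(Real.sin x - (x - x^3/6)) + -(x^3/6)|
          ≤ |Real.sin x - (x - x^3/6)| + |-(x^3/6)| := abs_add_le _ _
        _ ≤ |x|^4 * (5/96) + |x|^3/6 := by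
            have : |-(x^3/6)| = |x|^3/6 := by
              rw [abs_neg, abs_div, abs_pow]; norm_num
            rw [this]; linarith [hsinb, show |x|^5/100 ≤ |x|^4*(5/96) by nlinarith [pow_nonneg (abs_nonneg x) 4, abs_nonneg x]]
        _ ≤ x ^ 2 := by nlinarith [h4, h3]
    have hβk : |1 - βt k| ≤ 1 + B := by
      have h := abs_le.1 (hβb k)
      exact abs_le.2 ⟨by linarith, by linarith⟩
    have e1 : |Real.cos (Real.pi * (k + 1) * s)| ≤ 1 := Real.abs_cos_le_one _
    have e2 : |Real.sin (Real.pi * (k + 1) * s)| ≤ 1 := Real.abs_sin_le_one _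
    have inner_bound : |Real.cos (Real.pi * (k + 1) * s) * (1 - Real.cos x)
        + Real.sin (Real.pi * (k + 1) * s) * (Real.sin x - x)| ≤ 2 * x ^ 2 := by
      calc |Real.cos (Real.pi * (k + 1) * s) * (1 - Real.cos x)
            + Real.sin (Real.pi * (k + 1) * s) * (Real.sin x - x)|
          ≤ |Real.cos (Real.pi * (k + 1) * s) * (1 - Real.cos x)|
            + |Real.sin (Real.pi * (k + 1) * s) * (Real.sin x - x)| := abs_add_le _ _
        _ = |Real.cos (Real.pi * (k + 1) * s)| * |1 - Real.cos x|
            + |Real.sin (Real.pi * (k + 1) * s)| * |Real.sin x - x| := by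
            rw [abs_mul, abs_mul]
        _ ≤ 1 * x^2 + 1 * x^2 := add_le_add
            (mul_le_mul e1 h1c (abs_nonneg _) zero_le_one)
            (mul_le_mul e2 h1s (abs_nonneg _) zero_le_one)
        _ = 2 * x ^ 2 := by ring
    have hrs : |r k s| = |1 - βt k| * |Real.cos (Real.pi * (k + 1) * s) * (1 - Real.cos x)
        + Real.sin (Real.pi * (k + 1) * s) * (Real.sin x - x)| := by
      rw [hr, abs_mul]
    rw [hrs]
    have step1 : |1 - βt k| * |Real.cos (Real.pi * (k + 1) * s) * (1 - Real.cos x)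
        + Real.sin (Real.pi * (k + 1) * s) * (Real.sin x - x)| ≤ (1+B) * (2 * x^2) :=
      mul_le_mul hβk inner_bound (abs_nonneg _) (by linarith)
    have hs4 : s ^ 2 ≤ 4 := by nlinarith [hs.1, hs.2]
    have hxx : x ^ 2 = μ k ^ 2 * s ^ 2 := by rw [hxdef]; ring
    have step2 : (1+B) * (2 * x^2) ≤ 8 * (1+B) * μ k ^ 2 := by
      nlinarith [mul_nonneg (mul_nonneg (by linarith : (0:ℝ) ≤ 1 + B) (sq_nonneg (μ k)))
        (by linarith : (0:ℝ) ≤ 4 - s^2)]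
    linarith
  -- key decomposition
  have hdecomp : ∀ m n : ℕ, m ≤ n → S n - S m =
      ((fun s => ∑ k ∈ Finset.Ico m n, βt k * Real.cos (Real.pi * (k + 1) * s))
        + ((fun s : ℝ => s * ∑ k ∈ Finset.Ico m n,
              ((1 - βt k) * μ k) * Real.sin (Real.pi * (k + 1) * s))
          + (fun s => ∑ k ∈ Finset.Ico m n, r k s))) := by
    intro m n hmn
    funext s
    simp only [Pi.add_apply, Pi.sub_apply, hS, hr]
    rw [← Finset.sum_Ico_eq_sub _ hmn, Finset.mul_sum, ← Finset.sum_add_distrib,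
      ← Finset.sum_add_distrib]
    refine Finset.sum_congr rfl fun k _ => ?_
    rw [show (Real.pi * (k + 1) + μ k) * s = Real.pi * (k + 1) * s + μ k * s by ring,
      Real.cos_add]
    ring
  -- summability facts
  have hsum2 : Summable (fun k => ((1 - βt k) * μ k) ^ 2) := by
    apply Summable.of_nonneg_of_le (fun k => sq_nonneg _) (fun k => ?_)
      (hμ.mul_left ((1+B)^2))
    have h := abs_le.1 (hβb k)
    have h1 : (1 - βt k)^2 ≤ (1+B)^2 := by nlinarith
    calc ((1 - βt k) * μ k) ^ 2 = (1 - βt k)^2 * μ k ^2 := by ring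
      _ ≤ (1+B)^2 * μ k ^ 2 := mul_le_mul_of_nonneg_right h1 (sq_nonneg _)
  have hsum3 : Summable (fun k => 16 * (1+B) * μ k ^ 2) := hμ.mul_left _
  -- the main distance estimate
  have hdist : ∀ m n : ℕ, N₀ ≤ m → m ≤ n →
      ‖FL n - FL m‖ ≤ Real.sqrt (∑ k ∈ Finset.Ico m n, βt k ^ 2)
        + 2 * Real.sqrt (∑ k ∈ Finset.Ico m n, ((1 - βt k) * μ k) ^ 2)
        + ∑ k ∈ Finset.Ico m n, 16 * (1+B) * μ k ^ 2 := by
    intro m n hm hmn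
    have contA : Continuous (fun s => ∑ k ∈ Finset.Ico m n,
        βt k * Real.cos (Real.pi * (k + 1) * s)) :=
      continuous_finset_sum _ fun k _ => continuous_const.mul (contCos _)
    have contg : Continuous (fun s => ∑ k ∈ Finset.Ico m n,
        ((1 - βt k) * μ k) * Real.sin (Real.pi * (k + 1) * s)) :=
      continuous_finset_sum _ fun k _ => continuous_const.mul (contSin _)
    have contB : Continuous (fun s : ℝ => s * ∑ k ∈ Finset.Ico m n,
        ((1 - βt k) * μ k) * Real.sin (Real.pi * (k + 1) * s)) := continuous_id.mul contg
    have contR : Continuous (fun s => ∑ k ∈ Finset.Ico m n, r k s) :=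
      continuous_finset_sum _ fun k _ => (contr k).comp continuous_id
    have h1 : FL n - FL m = (memL2 contA).toLp _
        + ((memL2 contB).toLp _ + (memL2 contR).toLp _) := by
      rw [hFL]
      calc (memL2 (contS n)).toLp (S n) - (memL2 (contS m)).toLp (S m)
          = ((memL2 (contS n)).sub (memL2 (contS m))).toLp (S n - S m) :=
            (MemLp.toLp_sub _ _).symm
        _ = ((memL2 contA).add ((memL2 contB).add (memL2 contR))).toLp _ :=
            toLp_congr _ _ (hdecomp m n hmn)
        _ = _ := by rw [MemLp.toLp_add (memL2 contA) ((memL2 contB).add (memL2 contR)), MemLp.toLp_add (memL2 contB) (memL2 contR)]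
    rw [h1]
    have hAnorm : ‖(memL2 contA).toLp _‖
        = Real.sqrt (∑ k ∈ Finset.Ico m n, βt k ^ 2) := by
      have hsq := norm_toLp_sq (memL2 contA)
      rw [integral_sum_sq (Finset.Ico m n) (fun k => βt k)
        (fun k s => Real.cos (Real.pi * (k + 1) * s)) (fun k => contCos _) cos_orth] at hsq
      rw [← Real.sqrt_sq (norm_nonneg ((memL2 contA).toLp _)), hsq]
    have hgnorm : ‖(memL2 contg).toLp _‖
        = Real.sqrt (∑ k ∈ Finset.Ico m n, ((1 - βt k) * μ k) ^ 2) := by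
      have hsq := norm_toLp_sq (memL2 contg)
      rw [integral_sum_sq (Finset.Ico m n) (fun k => (1 - βt k) * μ k)
        (fun k s => Real.sin (Real.pi * (k + 1) * s)) (fun k => contSin _) sin_orth] at hsq
      rw [← Real.sqrt_sq (norm_nonneg ((memL2 contg).toLp _)), hsq]
    have hBnorm : ‖(memL2 contB).toLp _‖
        ≤ 2 * Real.sqrt (∑ k ∈ Finset.Ico m n, ((1 - βt k) * μ k) ^ 2) := by
      rw [← hgnorm]
      exact norm_toLp_mul_s contg
    have hRnorm : ‖(memL2 contR).toLp _‖ ≤ ∑ k ∈ Finset.Ico m n, 16 * (1+B) * μ k ^ 2 := by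
      have hC0 : 0 ≤ ∑ k ∈ Finset.Ico m n, 8 * (1+B) * μ k ^ 2 :=
        Finset.sum_nonneg fun k _ =>
          mul_nonneg (mul_nonneg (by norm_num) (by linarith)) (sq_nonneg _)
      have hb : ∀ s ∈ Set.Icc (0:ℝ) 2, |∑ k ∈ Finset.Ico m n, r k s|
          ≤ ∑ k ∈ Finset.Ico m n, 8 * (1+B) * μ k ^ 2 := by
        intro s hs
        calc |∑ k ∈ Finset.Ico m n, r k s| ≤ ∑ k ∈ Finset.Ico m n, |r k s| :=
              Finset.abs_sum_le_sum_abs _ _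
          _ ≤ ∑ k ∈ Finset.Ico m n, 8 * (1+B) * μ k ^ 2 :=
              Finset.sum_le_sum fun k hk =>
                hrbound k (le_trans hm (Finset.mem_Ico.1 hk).1) s hs
      calc ‖(memL2 contR).toLp _‖ ≤ 2 * ∑ k ∈ Finset.Ico m n, 8 * (1+B) * μ k ^ 2 :=
            norm_toLp_le_bound contR hC0 hb
        _ = ∑ k ∈ Finset.Ico m n, 16 * (1+B) * μ k ^ 2 := by
            rw [Finset.mul_sum]; exact Finset.sum_congr rfl fun k _ => by ring
    calc ‖(memL2 contA).toLp _ + ((memL2 contB).toLp _ + (memL2 contR).toLp _)‖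
        ≤ ‖(memL2 contA).toLp _‖ + (‖(memL2 contB).toLp _‖ + ‖(memL2 contR).toLp _‖) :=
          (norm_add_le _ _).trans (add_le_add_right (norm_add_le _ _) _)
      _ ≤ _ := by rw [hAnorm]; linarith [hBnorm, hRnorm]
  -- tail bound helper
  have hfin : ∀ (g : ℕ → ℝ), (∀ k, 0 ≤ g k) → Summable g → ∀ (N n : ℕ),
      ∑ k ∈ Finset.Ico N n, g k ≤ ∑' k, g (k + N) := by
    intro g hg hsum N n
    rw [Finset.sum_Ico_eq_sum_range]
    calc ∑ i ∈ Finset.range (n - N), g (N + i)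
        = ∑ i ∈ Finset.range (n - N), g (i + N) := by
          exact Finset.sum_congr rfl fun i _ => by rw [add_comm]
      _ ≤ ∑' i, g (i + N) :=
          Summable.sum_le_tsum _ (fun i _ => hg _) ((summable_nat_add_iff N).2 hsum)
  -- Cauchy
  have hcauchy : CauchySeq FL := by
    rw [Metric.cauchySeq_iff']
    intro ε hε
    have t1 := tendsto_sum_nat_add (fun k => βt k ^ 2)
    have t2 := tendsto_sum_nat_add (fun k => ((1 - βt k) * μ k) ^ 2)
    have t3 := tendsto_sum_nat_add (fun k => 16 * (1+B) * μ k ^ 2)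
    have e1 := t1.eventually_lt_const (by positivity : (0:ℝ) < (ε/4)^2)
    have e2 := t2.eventually_lt_const (by positivity : (0:ℝ) < (ε/8)^2)
    have e3 := t3.eventually_lt_const (by linarith : (0:ℝ) < ε/4)
    obtain ⟨N, ⟨⟨hN1, hN2, hN3⟩, hNN₀⟩⟩ :=
      ((e1.and (e2.and e3)).and (eventually_ge_atTop N₀)).exists
    refine ⟨N, fun n hn => ?_⟩
    rw [dist_eq_norm]
    have hd := hdist N n hNN₀ hn
    have q1 := hfin (fun k => βt k ^ 2) (fun k => sq_nonneg _) hβ N n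
    have q2 := hfin (fun k => ((1 - βt k) * μ k) ^ 2) (fun k => sq_nonneg _) hsum2 N n
    have q3 := hfin (fun k => 16 * (1+B) * μ k ^ 2)
      (fun k => mul_nonneg (mul_nonneg (by norm_num) (by linarith)) (sq_nonneg _)) hsum3 N n
    have s1 : Real.sqrt (∑ k ∈ Finset.Ico N n, βt k ^ 2) ≤ ε/4 := by
      calc Real.sqrt (∑ k ∈ Finset.Ico N n, βt k ^ 2) ≤ Real.sqrt ((ε/4)^2) :=
            Real.sqrt_le_sqrt (by linarith)
        _ = ε/4 := Real.sqrt_sq (by linarith)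
    have s2 : Real.sqrt (∑ k ∈ Finset.Ico N n, ((1 - βt k) * μ k) ^ 2) ≤ ε/8 := by
      calc Real.sqrt (∑ k ∈ Finset.Ico N n, ((1 - βt k) * μ k) ^ 2)
          ≤ Real.sqrt ((ε/8)^2) := Real.sqrt_le_sqrt (by linarith)
        _ = ε/8 := Real.sqrt_sq (by linarith)
    have s3 : ∑ k ∈ Finset.Ico N n, 16 * (1+B) * μ k ^ 2 ≤ ε/4 := by linarith
    calc ‖FL n - FL N‖ ≤ _ := hd
      _ < ε := by linarith
  -- limit
  obtain ⟨Φ, hΦ⟩ := cauchySeq_tendsto_of_complete hcauchy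
  refine ⟨fun s => Φ s, ?_⟩
  have hnorm : Tendsto (fun N => ‖FL N - Φ‖) atTop (nhds 0) :=
    tendsto_iff_norm_sub_tendsto_zero.1 hΦ
  have hsq : Tendsto (fun N => ‖FL N - Φ‖ ^ 2) atTop (nhds 0) := by
    have := hnorm.pow 2
    simpa using this
  refine hsq.congr fun N => ?_
  have hae : (fun a => ((FL N - Φ) a) ^ 2) =ᵐ[mI] fun a => (S N a - Φ a) ^ 2 := by
    filter_upwards [Lp.coeFn_sub (FL N) Φ, (memL2 (contS N)).coeFn_toLp] with a ha hb
    rw [ha, Pi.sub_apply]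
    simp only [hFL] at hb ⊢
    rw [hb]
  calc ‖FL N - Φ‖ ^ 2 = ∫ a, ((FL N - Φ) a) ^ 2 ∂mI := norm_Lp_sq _
    _ = ∫ a, (S N a - Φ a) ^ 2 ∂mI := integral_congr_ae hae
    _ = ∫ s in (0:ℝ)..2, (S N s - Φ s) ^ 2 := integral_mI
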